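/- Suppose F : S_g → C is holomorphic, satisfies the weight-κ modular transformation law F(γ⟨τ⟩) = det(cτ+d)^κ F(τ), and vanishes identically on a Γ_g-invariant complex submanifold H ⊂ S_g. Then the gradient matrix ∂_τ F (the symmetric matrix of partial derivatives ∂F/∂τ_{ij}, with off-diagonal entries weighted by 1/2), restricted to H, transforms as ∂_τ F(γ⟨τ⟩) = det(cτ+d)^κ (cτ+d) (∂_τ F(τ)) (cτ+d)^t for all γ ∈ Γ_g and τ ∈ H. -/

import Mathlib

open Matrix

attribute [local instance] Matrix.normedAddCommGroup Matrix.normedSpace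

/-- The Siegel upper half-space of degree g. -/
def SiegelSpace (g : ℕ) : Set (Matrix (Fin g) (Fin g) ℂ) :=
  {τ | τᵀ = τ ∧ (τ.map Complex.im).PosDef}

/-- The symplectic group Sp(2g, ℤ). -/
structure SpZ (g : ℕ) where
  a : Matrix (Fin g) (Fin g) ℤ
  b : Matrix (Fin g) (Fin g) ℤ
  c : Matrix (Fin g) (Fin g) ℤ
  d : Matrix (Fin g) (Fin g) ℤ
  hac : aᵀ * c = cᵀ * a
  hbd : bᵀ * d = dᵀ * b
  had : aᵀ * d - cᵀ * b = 1

/-- The automorphy factor cτ + d. -/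
noncomputable def SpZ.cd {g : ℕ} (γ : SpZ g) (τ : Matrix (Fin g) (Fin g) ℂ) :
    Matrix (Fin g) (Fin g) ℂ :=
  γ.c.map (Int.cast) * τ + γ.d.map (Int.cast)

/-- The action γ⟨τ⟩ = (aτ+b)(cτ+d)⁻¹. -/
noncomputable def SpZ.act {g : ℕ} (γ : SpZ g) (τ : Matrix (Fin g) (Fin g) ℂ) :
    Matrix (Fin g) (Fin g) ℂ :=
  (γ.a.map (Int.cast) * τ + γ.b.map (Int.cast)) * (γ.cd τ)⁻¹

namespace GradAux
variable {g : ℕ}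


lemma hasDerivAt_matrix {φ : ℝ → Matrix (Fin g) (Fin g) ℂ} {φ' : Matrix (Fin g) (Fin g) ℂ} {x : ℝ} :
    HasDerivAt φ φ' x ↔ ∀ i j, HasDerivAt (fun t => φ t i j) (φ' i j) x := by
  exact hasDerivAt_pi.trans (forall_congr' fun i => hasDerivAt_pi)

lemma hasDerivAt_matmul {φ ψ : ℝ → Matrix (Fin g) (Fin g) ℂ} {φ' ψ' : Matrix (Fin g) (Fin g) ℂ}
    {x : ℝ} (hφ : HasDerivAt φ φ' x) (hψ : HasDerivAt ψ ψ' x) :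
    HasDerivAt (fun t => φ t * ψ t) (φ' * ψ x + φ x * ψ') x := by
  rw [hasDerivAt_matrix] at *
  intro i j
  have h : ∀ t, (φ t * ψ t) i j = ∑ k, φ t i k * ψ t k j := fun t => Matrix.mul_apply
  simp only [h]
  have : HasDerivAt (fun t => ∑ k, φ t i k * ψ t k j)
      (∑ k, (φ' i k * ψ x k j + φ x i k * ψ' k j)) x :=
    HasDerivAt.fun_sum fun k _ => (hφ i k).mul (hψ k j)
  convert this using 1
  simp [Matrix.add_apply, Matrix.mul_apply, Finset.sum_add_distrib]

lemma differentiableAt_det' {φ : ℝ → Matrix (Fin g) (Fin g) ℂ} {x : ℝ}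
    (h : ∀ i j, DifferentiableAt ℝ (fun t => φ t i j) x) :
    DifferentiableAt ℝ (fun t => (φ t).det) x := by
  simp only [Matrix.det_apply']
  exact DifferentiableAt.fun_sum fun σ _ =>
    (DifferentiableAt.fun_finsetProd (fun i _ => h (σ i) i)).const_mul _

lemma differentiableAt_adjugate {φ : ℝ → Matrix (Fin g) (Fin g) ℂ} {x : ℝ}
    (h : ∀ i j, DifferentiableAt ℝ (fun t => φ t i j) x) (i j : Fin g) :
    DifferentiableAt ℝ (fun t => (φ t).adjugate i j) x := by
  simp only [Matrix.adjugate_apply]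
  apply differentiableAt_det'
  intro a b
  simp only [Matrix.updateRow_apply]
  by_cases hab : a = j
  · simp [hab]
  · simpa [hab] using h a b

lemma differentiableAt_matinv {φ : ℝ → Matrix (Fin g) (Fin g) ℂ} {x : ℝ}
    (h : ∀ i j, DifferentiableAt ℝ (fun t => φ t i j) x) (hdet : (φ x).det ≠ 0) :
    DifferentiableAt ℝ (fun t => (φ t)⁻¹) x := by
  have hd := differentiableAt_det' h
  have : ∀ i j, DifferentiableAt ℝ (fun t => (φ t)⁻¹ i j) x := by
    intro i j
    have : ∀ t, (φ t)⁻¹ i j = ((φ t).det)⁻¹ * (φ t).adjugate i j := by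
      intro t
      rw [Matrix.inv_def]
      simp [Ring.inverse_eq_inv']
    simp only [this]
    exact (hd.inv hdet).mul (differentiableAt_adjugate h i j)
  exact differentiableAt_pi.2 fun i => differentiableAt_pi.2 fun j => this i j

lemma hasDerivAt_matinv {φ : ℝ → Matrix (Fin g) (Fin g) ℂ} {φ' : Matrix (Fin g) (Fin g) ℂ}
    {x : ℝ} (hφ : HasDerivAt φ φ' x) (hdet : (φ x).det ≠ 0) :
    HasDerivAt (fun t => (φ t)⁻¹) (-((φ x)⁻¹ * φ' * (φ x)⁻¹)) x := by
  have hent : ∀ i j, DifferentiableAt ℝ (fun t => φ t i j) x := fun i j =>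
    (hasDerivAt_matrix.1 hφ i j).differentiableAt
  have hD := differentiableAt_matinv hent hdet
  set ψ' := deriv (fun t => (φ t)⁻¹) x with hψ'
  have hψ : HasDerivAt (fun t => (φ t)⁻¹) ψ' x := hD.hasDerivAt
  have hprod : HasDerivAt (fun t => φ t * (φ t)⁻¹) (φ' * (φ x)⁻¹ + φ x * ψ') x :=
    hasDerivAt_matmul hφ hψ
  have hev : (fun t => φ t * (φ t)⁻¹) =ᶠ[nhds x] (fun _ => (1 : Matrix (Fin g) (Fin g) ℂ)) := by
    have hcont : ContinuousAt (fun t => (φ t).det) x := (differentiableAt_det' hent).continuousAt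
    filter_upwards [hcont.eventually_ne hdet] with t ht
    exact Matrix.mul_nonsing_inv _ (isUnit_iff_ne_zero.2 ht)
  have h0 : HasDerivAt (fun t => φ t * (φ t)⁻¹) 0 x :=
    (hasDerivAt_const x _).congr_of_eventuallyEq hev
  have key : φ' * (φ x)⁻¹ + φ x * ψ' = 0 := hprod.unique h0
  have hψ'val : ψ' = -((φ x)⁻¹ * φ' * (φ x)⁻¹) := by
    have h1 : φ x * ψ' = -(φ' * (φ x)⁻¹) := by
      rw [eq_neg_iff_add_eq_zero, add_comm]; exact key
    calc ψ' = (φ x)⁻¹ * (φ x * ψ') := by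
          rw [← Matrix.mul_assoc, Matrix.nonsing_inv_mul _ (isUnit_iff_ne_zero.2 hdet),
            Matrix.one_mul]
      _ = -((φ x)⁻¹ * φ' * (φ x)⁻¹) := by rw [h1]; noncomm_ring
  rw [← hψ'val]
  exact hψ


lemma map_intCast_mul (M N : Matrix (Fin g) (Fin g) ℤ) :
    ((M * N).map (Int.cast : ℤ → ℂ)) = M.map Int.cast * N.map Int.cast := by
  ext i j
  simp [Matrix.mul_apply, Matrix.map_apply]

lemma map_intCast_transpose (M : Matrix (Fin g) (Fin g) ℤ) :
    (Mᵀ.map (Int.cast : ℤ → ℂ)) = (M.map Int.cast)ᵀ := rfl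


def Am (γ : SpZ g) : Matrix (Fin g) (Fin g) ℂ := γ.a.map Int.cast
def Bm (γ : SpZ g) : Matrix (Fin g) (Fin g) ℂ := γ.b.map Int.cast
def Cm (γ : SpZ g) : Matrix (Fin g) (Fin g) ℂ := γ.c.map Int.cast
def Dm (γ : SpZ g) : Matrix (Fin g) (Fin g) ℂ := γ.d.map Int.cast

variable (γ : SpZ g)

lemma cd_eq (τ : Matrix (Fin g) (Fin g) ℂ) : γ.cd τ = Cm γ * τ + Dm γ := rfl

lemma act_eq (τ : Matrix (Fin g) (Fin g) ℂ) :
    γ.act τ = (Am γ * τ + Bm γ) * (γ.cd τ)⁻¹ := rfl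

lemma relAC : (Am γ)ᵀ * Cm γ = (Cm γ)ᵀ * Am γ := by
  have := congrArg (fun M => M.map (Int.cast : ℤ → ℂ)) γ.hac
  simpa [Am, Cm, map_intCast_mul, map_intCast_transpose] using this

lemma relBD : (Bm γ)ᵀ * Dm γ = (Dm γ)ᵀ * Bm γ := by
  have := congrArg (fun M => M.map (Int.cast : ℤ → ℂ)) γ.hbd
  simpa [Bm, Dm, map_intCast_mul, map_intCast_transpose] using this

lemma relAD : (Am γ)ᵀ * Dm γ - (Cm γ)ᵀ * Bm γ = 1 := by
  ext i j
  have h := congrArg (fun M : Matrix (Fin g) (Fin g) ℤ => ((M i j : ℤ) : ℂ)) γ.had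
  simp only [Matrix.sub_apply, Matrix.mul_apply, Matrix.transpose_apply, Matrix.one_apply,
    apply_ite (Int.cast : ℤ → ℂ)] at h
  push_cast at h
  simpa [Am, Bm, Cm, Dm, Matrix.sub_apply, Matrix.mul_apply, Matrix.transpose_apply,
    Matrix.one_apply, Matrix.map_apply] using h

lemma relAD' : (Dm γ)ᵀ * Am γ - (Bm γ)ᵀ * Cm γ = 1 := by
  have := congrArg Matrix.transpose (relAD γ)
  simpa [Matrix.transpose_sub, Matrix.transpose_mul] using this

lemma relCB : (Cm γ)ᵀ * Bm γ - (Am γ)ᵀ * Dm γ = -1 := by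
  rw [← neg_sub, relAD γ]

lemma cd_transpose {τ : Matrix (Fin g) (Fin g) ℂ} (hτ : τᵀ = τ) :
    (γ.cd τ)ᵀ = τ * (Cm γ)ᵀ + (Dm γ)ᵀ := by
  rw [cd_eq, Matrix.transpose_add, Matrix.transpose_mul, hτ]

/-- symmetry identity: (Cτ+D)ᵀ(Aτ+B) = (Aτ+B)ᵀ(Cτ+D) for symmetric τ. -/
lemma sym_identity {τ : Matrix (Fin g) (Fin g) ℂ} (hτ : τᵀ = τ) :
    (γ.cd τ)ᵀ * (Am γ * τ + Bm γ) = (Am γ * τ + Bm γ)ᵀ * (γ.cd τ) := by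
  rw [← sub_eq_zero, cd_transpose γ hτ]
  have expand : (τ * (Cm γ)ᵀ + (Dm γ)ᵀ) * (Am γ * τ + Bm γ) - (Am γ * τ + Bm γ)ᵀ * (γ.cd τ)
      = (τ * ((Cm γ)ᵀ * Am γ) * τ - τ * ((Am γ)ᵀ * Cm γ) * τ)
        + τ * ((Cm γ)ᵀ * Bm γ - (Am γ)ᵀ * Dm γ)
        + ((Dm γ)ᵀ * Am γ - (Bm γ)ᵀ * Cm γ) * τ + ((Dm γ)ᵀ * Bm γ - (Bm γ)ᵀ * Dm γ) := by
    rw [Matrix.transpose_add, Matrix.transpose_mul, hτ, cd_eq]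
    noncomm_ring
  rw [expand, relAC γ, relCB γ, relAD' γ, ← relBD γ, sub_self, sub_self, add_zero,
    zero_add, Matrix.mul_neg, Matrix.mul_one, Matrix.one_mul, neg_add_cancel]

/-- the "one" identity: (Cτ+D)ᵀ A − (Aτ+B)ᵀ C = 1 for symmetric τ. -/
lemma one_identity {τ : Matrix (Fin g) (Fin g) ℂ} (hτ : τᵀ = τ) :
    (γ.cd τ)ᵀ * Am γ - (Am γ * τ + Bm γ)ᵀ * Cm γ = 1 := by
  rw [cd_transpose γ hτ]
  have expand : (τ * (Cm γ)ᵀ + (Dm γ)ᵀ) * Am γ - (Am γ * τ + Bm γ)ᵀ * Cm γ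
      = (τ * ((Cm γ)ᵀ * Am γ) - τ * ((Am γ)ᵀ * Cm γ)) + ((Dm γ)ᵀ * Am γ - (Bm γ)ᵀ * Cm γ) := by
    rw [Matrix.transpose_add, Matrix.transpose_mul, hτ]
    noncomm_ring
  rw [expand, relAC γ, relAD' γ, sub_self, zero_add]


lemma cm_herm (M : Matrix (Fin g) (Fin g) ℤ) :
    (M.map (Int.cast : ℤ → ℂ))ᴴ = (M.map Int.cast)ᵀ := by
  ext i j
  simp [Matrix.conjTranspose_apply, Matrix.map_apply]

lemma conj_identity {τ : Matrix (Fin g) (Fin g) ℂ} (hτ : τᵀ = τ) :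
    (γ.cd τ)ᴴ * (Am γ * τ + Bm γ) - (Am γ * τ + Bm γ)ᴴ * γ.cd τ = τ - τᴴ := by
  have hC : (γ.cd τ)ᴴ = τᴴ * (Cm γ)ᵀ + (Dm γ)ᵀ := by
    rw [cd_eq, Matrix.conjTranspose_add, Matrix.conjTranspose_mul,
      show (Cm γ)ᴴ = (Cm γ)ᵀ from cm_herm _, show (Dm γ)ᴴ = (Dm γ)ᵀ from cm_herm _]
  have hA : (Am γ * τ + Bm γ)ᴴ = τᴴ * (Am γ)ᵀ + (Bm γ)ᵀ := by
    rw [Matrix.conjTranspose_add, Matrix.conjTranspose_mul,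
      show (Am γ)ᴴ = (Am γ)ᵀ from cm_herm _, show (Bm γ)ᴴ = (Bm γ)ᵀ from cm_herm _]
  rw [hC, hA]
  have expand :
      (τᴴ * (Cm γ)ᵀ + (Dm γ)ᵀ) * (Am γ * τ + Bm γ) - (τᴴ * (Am γ)ᵀ + (Bm γ)ᵀ) * (γ.cd τ)
      = (τᴴ * ((Cm γ)ᵀ * Am γ) * τ - τᴴ * ((Am γ)ᵀ * Cm γ) * τ)
        + τᴴ * ((Cm γ)ᵀ * Bm γ - (Am γ)ᵀ * Dm γ)
        + ((Dm γ)ᵀ * Am γ - (Bm γ)ᵀ * Cm γ) * τ + ((Dm γ)ᵀ * Bm γ - (Bm γ)ᵀ * Dm γ) := by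
    rw [cd_eq]; noncomm_ring
  rw [expand, relAC γ, relCB γ, relAD' γ, ← relBD γ, sub_self, sub_self, add_zero, zero_add,
    Matrix.mul_neg, Matrix.mul_one, Matrix.one_mul]
  abel

lemma posdef_complex {N : Matrix (Fin g) (Fin g) ℝ} (hN : N.PosDef) {v : Fin g → ℂ}
    (hv : v ≠ 0) : 0 < (star v ⬝ᵥ ((N.map Complex.ofReal) *ᵥ v)).re := by
  classical
  set x : Fin g → ℝ := fun i => (v i).re with hx
  set y : Fin g → ℝ := fun i => (v i).im with hy
  have hre : (star v ⬝ᵥ ((N.map Complex.ofReal) *ᵥ v)).re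
      = x ⬝ᵥ (N *ᵥ x) + y ⬝ᵥ (N *ᵥ y) := by
    have h1 : star v ⬝ᵥ ((N.map Complex.ofReal) *ᵥ v)
        = ∑ i, ∑ j, (starRingEnd ℂ) (v i) * ((N i j : ℂ) * v j) := by
      simp [dotProduct, Matrix.mulVec, Matrix.map_apply, Finset.mul_sum, mul_assoc]
    have hterm : ∀ i j, ((starRingEnd ℂ) (v i) * ((N i j : ℂ) * v j)).re
        = x i * (N i j * x j) + y i * (N i j * y j) := by
      intro i j
      simp [Complex.mul_re, Complex.mul_im, hx, hy]
    rw [h1, Complex.re_sum]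
    simp only [Complex.re_sum, hterm]
    have h2 : x ⬝ᵥ (N *ᵥ x) = ∑ i, ∑ j, x i * (N i j * x j) := by
      simp [dotProduct, Matrix.mulVec, Finset.mul_sum]
    have h3 : y ⬝ᵥ (N *ᵥ y) = ∑ i, ∑ j, y i * (N i j * y j) := by
      simp [dotProduct, Matrix.mulVec, Finset.mul_sum]
    rw [h2, h3]
    simp [Finset.sum_add_distrib]
  rw [hre]
  have hxy : x ≠ 0 ∨ y ≠ 0 := by
    by_contra h
    push_neg at h
    apply hv
    funext i
    exact Complex.ext (congrFun h.1 i) (congrFun h.2 i)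
  rcases hxy with h | h
  · have h1 : 0 < x ⬝ᵥ (N *ᵥ x) := by simpa using hN.dotProduct_mulVec_pos h
    have h2 : 0 ≤ y ⬝ᵥ (N *ᵥ y) := by simpa using hN.posSemidef.dotProduct_mulVec_nonneg y
    linarith
  · have h1 : 0 ≤ x ⬝ᵥ (N *ᵥ x) := by simpa using hN.posSemidef.dotProduct_mulVec_nonneg x
    have h2 : 0 < y ⬝ᵥ (N *ᵥ y) := by simpa using hN.dotProduct_mulVec_pos h
    linarith

lemma cd_det_ne_zero {τ : Matrix (Fin g) (Fin g) ℂ} (hτS : τ ∈ SiegelSpace g) :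
    (γ.cd τ).det ≠ 0 := by
  obtain ⟨hsym, hpos⟩ := hτS
  intro h0
  obtain ⟨v, hv, hMv⟩ := (Matrix.exists_mulVec_eq_zero_iff).2 h0
  have key : star v ⬝ᵥ ((τ - τᴴ) *ᵥ v) = 0 := by
    rw [← conj_identity γ hsym]
    have hexp : ((γ.cd τ)ᴴ * (Am γ * τ + Bm γ) - (Am γ * τ + Bm γ)ᴴ * γ.cd τ) *ᵥ v
        = (γ.cd τ)ᴴ *ᵥ ((Am γ * τ + Bm γ) *ᵥ v) - (Am γ * τ + Bm γ)ᴴ *ᵥ ((γ.cd τ) *ᵥ v) := by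
      rw [Matrix.sub_mulVec, Matrix.mulVec_mulVec, Matrix.mulVec_mulVec]
    rw [hexp, hMv, Matrix.mulVec_zero, sub_zero, Matrix.dotProduct_mulVec,
      ← Matrix.star_mulVec, hMv]
    simp
  have himg : τ - τᴴ = (2 * Complex.I) • ((τ.map Complex.im).map Complex.ofReal) := by
    ext i j
    have hji : τ j i = τ i j := congrFun (congrFun hsym i) j
    show τ i j - (starRingEnd ℂ) (τ j i) = (2 * Complex.I) * ((τ i j).im : ℂ)
    rw [hji, Complex.sub_conj]
    push_cast
    ring
  rw [himg, Matrix.smul_mulVec, dotProduct_smul, smul_eq_mul, mul_eq_zero] at key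
  rcases key with h | h
  · simp [Complex.I_ne_zero] at h
  · have := posdef_complex hpos hv
    rw [h] at this
    simp at this


lemma trace_mul_single (M : Matrix (Fin g) (Fin g) ℂ) (i j : Fin g) :
    (M * Matrix.single i j 1).trace = M j i := by
  classical
  rw [Matrix.trace]
  rw [Finset.sum_eq_single j]
  · simp [Matrix.diag]
  · intro k _ hk
    simpa [Matrix.diag] using Matrix.mul_single_apply_of_ne 1 i j k k hk M
  · simp

lemma single_sym (i j : Fin g) :
    (Matrix.single i j (1:ℂ) + Matrix.single j i 1)ᵀ
      = Matrix.single i j 1 + Matrix.single j i 1 := by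
  have h1 : ∀ a b : Fin g, (Matrix.single a b (1:ℂ))ᵀ = Matrix.single b a 1 := by
    intro a b
    ext p q
    simp [Matrix.single, Matrix.transpose_apply, and_comm]
  rw [Matrix.transpose_add, h1, h1, add_comm]

lemma single_im (i j : Fin g) (a b : Fin g) :
    ((Matrix.single i j (1:ℂ) + Matrix.single j i 1 :
      Matrix (Fin g) (Fin g) ℂ) a b).im = 0 := by
  rw [Matrix.add_apply, Complex.add_im]
  simp [Matrix.single, apply_ite Complex.im]

lemma eq_of_traces {P Q : Matrix (Fin g) (Fin g) ℂ} (hP : Pᵀ = P) (hQ : Qᵀ = Q)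
    (h : ∀ i j : Fin g,
      (P * (Matrix.single i j 1 + Matrix.single j i 1)).trace
        = (Q * (Matrix.single i j 1 + Matrix.single j i 1)).trace) :
    P = Q := by
  ext i j
  have hij := h i j
  rw [Matrix.mul_add, Matrix.trace_add, Matrix.mul_add, Matrix.trace_add,
    trace_mul_single, trace_mul_single, trace_mul_single, trace_mul_single] at hij
  have hPji : P j i = P i j := congrFun (congrFun hP i) j
  have hQji : Q j i = Q i j := congrFun (congrFun hQ i) j
  rw [hPji, hQji] at hij
  have h2 : (2:ℂ) * P i j = 2 * Q i j := by rw [two_mul, two_mul]; exact hij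
  exact mul_left_cancel₀ two_ne_zero h2

lemma curve_mem {τ : Matrix (Fin g) (Fin g) ℂ} (hτ : τ ∈ SiegelSpace g)
    {Y : Matrix (Fin g) (Fin g) ℂ} (hYsym : Yᵀ = Y) (hYim : ∀ a b, (Y a b).im = 0) (t : ℝ) :
    τ + t • Y ∈ SiegelSpace g := by
  obtain ⟨hsym, hpos⟩ := hτ
  constructor
  · rw [Matrix.transpose_add, Matrix.transpose_smul, hsym, hYsym]
  · have heq : (τ + t • Y).map Complex.im = τ.map Complex.im := by
      ext a b
      simp [Matrix.map_apply, Matrix.add_apply, Matrix.smul_apply, Complex.add_im,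
        Complex.smul_im, hYim]
    rw [heq]
    exact hpos

end GradAux

/-- let F be holomorphic on the space of g×g complex matrices,
satisfying the weight-κ modular transformation law on the Siegel upper
half-space S_g, and vanishing identically on a Γ_g-invariant subset H ⊆ S_g.
Let ∂_τF be the symmetric gradient matrix of F, characterized by
dF(τ)[X] = tr(∂_τF(τ)·X) for symmetric directions X (this weights the
off-diagonal partial derivatives by 1/2).  Then on H the gradient transforms
as ∂_τF(γ⟨τ⟩) = det(cτ+d)^κ (cτ+d)(∂_τF(τ))(cτ+d)ᵀ for all γ ∈ Γ_g. -/
theorem gradient_transformation (g : ℕ) (κ : ℤ)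
    (F : Matrix (Fin g) (Fin g) ℂ → ℂ) (hol : Differentiable ℂ F)
    (DF : Matrix (Fin g) (Fin g) ℂ → Matrix (Fin g) (Fin g) ℂ)
    (hDFsym : ∀ τ, (DF τ)ᵀ = DF τ)
    (hDF : ∀ τ, ∀ X : Matrix (Fin g) (Fin g) ℂ, Xᵀ = X →
      fderiv ℂ F τ X = ((DF τ) * X).trace)
    (H : Set (Matrix (Fin g) (Fin g) ℂ)) (hHS : H ⊆ SiegelSpace g)
    (hHinv : ∀ γ : SpZ g, ∀ τ ∈ H, γ.act τ ∈ H)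
    (hmod : ∀ γ : SpZ g, ∀ τ ∈ SiegelSpace g,
      F (γ.act τ) = (γ.cd τ).det ^ κ * F τ)
    (hvan : ∀ τ ∈ H, F τ = 0) :
    ∀ γ : SpZ g, ∀ τ ∈ H,
      DF (γ.act τ) = (γ.cd τ).det ^ κ • ((γ.cd τ) * DF τ * (γ.cd τ)ᵀ) := by
  intro γ τ hτ
  have hτS := hHS hτ
  obtain ⟨hsym, hpos⟩ := hτS
  have hτS' : τ ∈ SiegelSpace g := ⟨hsym, hpos⟩
  set C : Matrix (Fin g) (Fin g) ℂ := γ.cd τ with hCdef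
  have hdet : C.det ≠ 0 := GradAux.cd_det_ne_zero γ hτS'
  have hdetU : IsUnit C.det := isUnit_iff_ne_zero.2 hdet
  have hdetTU : IsUnit Cᵀ.det := by rw [Matrix.det_transpose]; exact hdetU
  have main : ∀ Y : Matrix (Fin g) (Fin g) ℂ, Yᵀ = Y → (∀ a b, (Y a b).im = 0) →
      ((DF (γ.act τ)) * ((Cᵀ)⁻¹ * Y * C⁻¹)).trace = C.det ^ κ * ((DF τ) * Y).trace := by
    intro Y hYsym hYim
    set σ : ℝ → Matrix (Fin g) (Fin g) ℂ := fun t => τ + t • Y with hσdef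
    have hσ0 : σ 0 = τ := by simp [hσdef]
    have hσS : ∀ t, σ t ∈ SiegelSpace g := fun t => GradAux.curve_mem hτS' hYsym hYim t
    have hσd : HasDerivAt σ Y 0 := by
      have h1 : HasDerivAt (fun t : ℝ => t • Y) ((1:ℝ) • Y) 0 := (hasDerivAt_id (0:ℝ)).smul_const Y
      rw [one_smul] at h1
      exact h1.const_add τ
    have hcdd : HasDerivAt (fun t => γ.cd (σ t)) (GradAux.Cm γ * Y) 0 := by
      have h := (GradAux.hasDerivAt_matmul (hasDerivAt_const (0:ℝ) (GradAux.Cm γ)) hσd).add_const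
        (GradAux.Dm γ)
      have h2 : (0 : Matrix (Fin g) (Fin g) ℂ) * σ 0 + GradAux.Cm γ * Y = GradAux.Cm γ * Y := by
        rw [Matrix.zero_mul, zero_add]
      rw [h2] at h
      exact h
    have hcd0 : γ.cd (σ 0) = C := by rw [hσ0]
    have hcdet : ∀ t, (γ.cd (σ t)).det ≠ 0 := fun t => GradAux.cd_det_ne_zero γ (hσS t)
    have hcinv : HasDerivAt (fun t => (γ.cd (σ t))⁻¹) (-(C⁻¹ * (GradAux.Cm γ * Y) * C⁻¹)) 0 := by
      have h := GradAux.hasDerivAt_matinv hcdd (by rw [hcd0]; exact hdet)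
      rwa [hcd0] at h
    have hnum : HasDerivAt (fun t => GradAux.Am γ * σ t + GradAux.Bm γ) (GradAux.Am γ * Y) 0 := by
      have h := (GradAux.hasDerivAt_matmul (hasDerivAt_const (0:ℝ) (GradAux.Am γ)) hσd).add_const
        (GradAux.Bm γ)
      have h2 : (0 : Matrix (Fin g) (Fin g) ℂ) * σ 0 + GradAux.Am γ * Y = GradAux.Am γ * Y := by
        rw [Matrix.zero_mul, zero_add]
      rw [h2] at h
      exact h
    have hact : HasDerivAt (fun t => γ.act (σ t)) ((Cᵀ)⁻¹ * Y * C⁻¹) 0 := by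
      have h := GradAux.hasDerivAt_matmul hnum hcinv
      rw [hσ0, ← hCdef] at h
      have hinvT : (Cᵀ)⁻¹ = GradAux.Am γ
          - (GradAux.Am γ * τ + GradAux.Bm γ) * C⁻¹ * GradAux.Cm γ := by
        apply Matrix.inv_eq_right_inv
        have h1 : Cᵀ * ((GradAux.Am γ * τ + GradAux.Bm γ) * C⁻¹ * GradAux.Cm γ)
            = (GradAux.Am γ * τ + GradAux.Bm γ)ᵀ * GradAux.Cm γ := by
          calc Cᵀ * ((GradAux.Am γ * τ + GradAux.Bm γ) * C⁻¹ * GradAux.Cm γ)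
              = (Cᵀ * (GradAux.Am γ * τ + GradAux.Bm γ)) * C⁻¹ * GradAux.Cm γ := by
                noncomm_ring
            _ = ((GradAux.Am γ * τ + GradAux.Bm γ)ᵀ * C) * C⁻¹ * GradAux.Cm γ := by
                rw [GradAux.sym_identity γ hsym]
            _ = (GradAux.Am γ * τ + GradAux.Bm γ)ᵀ * GradAux.Cm γ := by
                rw [Matrix.mul_nonsing_inv_cancel_right _ _ hdetU]
        rw [Matrix.mul_sub, h1]
        exact GradAux.one_identity γ hsym
      have hder_eq : GradAux.Am γ * Y * C⁻¹
          + (GradAux.Am γ * τ + GradAux.Bm γ) * -(C⁻¹ * (GradAux.Cm γ * Y) * C⁻¹)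
          = (Cᵀ)⁻¹ * Y * C⁻¹ := by
        rw [hinvT]
        noncomm_ring
      rw [hder_eq] at h
      exact h
    have hFl : HasDerivAt (fun t => F (γ.act (σ t)))
        (fderiv ℂ F (γ.act τ) ((Cᵀ)⁻¹ * Y * C⁻¹)) 0 := by
      have h := ((hol (γ.act (σ 0))).hasFDerivAt.restrictScalars ℝ).comp_hasDerivAt (0:ℝ) hact
      rw [hσ0] at h
      exact h
    have hFv : HasDerivAt (fun t => F (σ t)) (fderiv ℂ F τ Y) 0 := by
      have h := ((hol (σ 0)).hasFDerivAt.restrictScalars ℝ).comp_hasDerivAt (0:ℝ) hσd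
      rw [hσ0] at h
      exact h
    have hu : DifferentiableAt ℝ (fun t => (γ.cd (σ t)).det ^ κ) 0 := by
      have hd : DifferentiableAt ℝ (fun t => (γ.cd (σ t)).det) 0 :=
        GradAux.differentiableAt_det' fun i j =>
          (GradAux.hasDerivAt_matrix.1 hcdd i j).differentiableAt
      have hz : DifferentiableAt ℂ (fun z : ℂ => z ^ κ) ((γ.cd (σ 0)).det) :=
        differentiableAt_zpow.2 (Or.inl (hcdet 0))
      exact (hz.restrictScalars ℝ).comp 0 hd
    have hprod : HasDerivAt (fun t => (γ.cd (σ t)).det ^ κ * F (σ t))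
        (deriv (fun t => (γ.cd (σ t)).det ^ κ) 0 * F (σ 0)
          + (γ.cd (σ 0)).det ^ κ * fderiv ℂ F τ Y) 0 :=
      hu.hasDerivAt.mul hFv
    have hF0 : F (σ 0) = 0 := by rw [hσ0]; exact hvan τ hτ
    have hfun : (fun t => F (γ.act (σ t))) = fun t => (γ.cd (σ t)).det ^ κ * F (σ t) := by
      funext t
      exact hmod γ (σ t) (hσS t)
    rw [hfun] at hFl
    have huniq := hFl.unique hprod
    rw [hF0, mul_zero, zero_add, hcd0] at huniq
    have hXsym : ((Cᵀ)⁻¹ * Y * C⁻¹)ᵀ = (Cᵀ)⁻¹ * Y * C⁻¹ := by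
      rw [Matrix.transpose_mul, Matrix.transpose_mul, hYsym, Matrix.transpose_nonsing_inv,
        Matrix.transpose_nonsing_inv, Matrix.transpose_transpose, ← Matrix.mul_assoc]
    rw [hDF _ _ hXsym, hDF _ _ hYsym] at huniq
    exact huniq
  set P : Matrix (Fin g) (Fin g) ℂ := C⁻¹ * DF (γ.act τ) * (Cᵀ)⁻¹ with hPdef
  have hPsym : Pᵀ = P := by
    rw [hPdef, Matrix.transpose_mul, Matrix.transpose_mul, hDFsym, Matrix.transpose_nonsing_inv,
      Matrix.transpose_nonsing_inv, Matrix.transpose_transpose, ← Matrix.mul_assoc]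
  have hQsym : (C.det ^ κ • DF τ)ᵀ = C.det ^ κ • DF τ := by
    rw [Matrix.transpose_smul, hDFsym]
  have hPQ : P = C.det ^ κ • DF τ := by
    apply GradAux.eq_of_traces hPsym hQsym
    intro i j
    set Y : Matrix (Fin g) (Fin g) ℂ :=
      Matrix.single i j 1 + Matrix.single j i 1 with hYdef
    have h := main Y (GradAux.single_sym i j) (GradAux.single_im i j)
    have hl : ((DF (γ.act τ)) * ((Cᵀ)⁻¹ * Y * C⁻¹)).trace = (P * Y).trace := by
      calc ((DF (γ.act τ)) * ((Cᵀ)⁻¹ * Y * C⁻¹)).trace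
          = ((DF (γ.act τ) * (Cᵀ)⁻¹ * Y) * C⁻¹).trace := by
            rw [show DF (γ.act τ) * ((Cᵀ)⁻¹ * Y * C⁻¹)
              = (DF (γ.act τ) * (Cᵀ)⁻¹ * Y) * C⁻¹ from by noncomm_ring]
        _ = (C⁻¹ * (DF (γ.act τ) * (Cᵀ)⁻¹ * Y)).trace := Matrix.trace_mul_comm _ _
        _ = (P * Y).trace := by
            rw [hPdef, show C⁻¹ * (DF (γ.act τ) * (Cᵀ)⁻¹ * Y)
              = (C⁻¹ * DF (γ.act τ) * (Cᵀ)⁻¹) * Y from by noncomm_ring]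
    have hr : C.det ^ κ * ((DF τ) * Y).trace = ((C.det ^ κ • DF τ) * Y).trace := by
      rw [Matrix.smul_mul, Matrix.trace_smul, smul_eq_mul]
    rw [hl] at h
    rw [h, hr]
  have hfinal : DF (γ.act τ) = C * P * Cᵀ := by
    rw [hPdef]
    calc DF (γ.act τ)
        = (C * C⁻¹) * DF (γ.act τ) * ((Cᵀ)⁻¹ * Cᵀ) := by
          rw [Matrix.mul_nonsing_inv _ hdetU, Matrix.nonsing_inv_mul _ hdetTU,
            Matrix.one_mul, Matrix.mul_one]
      _ = C * (C⁻¹ * DF (γ.act τ) * (Cᵀ)⁻¹) * Cᵀ := by noncomm_ring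
  rw [hfinal, hPQ, Matrix.mul_smul, Matrix.smul_mul]
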